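/- arXiv:2109.01735 — 4 statements merged into one kernel-verified Lean document; each statement's English description precedes it below -/
import Mathlib

section
/- Let k ≥ 0 and let (a_1,…,a_n) be a k-Naples parking function under which car c_j parks in spot d_j for each 1 ≤ j ≤ n. Fix 1 ≤ i ≤ n and let p_1,…,p_i be distinct elements of {1,…,n} such that p_j = d_j for every j ≤ i except for exactly one index l ≤ i, for which p_l < d_l. Then, starting from the configuration in which spots p_1,…,p_i are already occupied, the cars c_{i+1},…,c_n with preferences a_{i+1},…,a_n all successfully park under the k-Naples parking rule. -/
/-- The spots a car with preference `p` checks backward: `p-1, p-2, …, max(p-k,1)`. -/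
def backCandidates (k p : ℕ) : List ℕ :=
  ((List.range k).map (fun i => p - (i + 1))).filter (fun s => decide (1 ≤ s))

/-- The spots a car with preference `p` checks when driving forward: `p+1, …, n`. -/
def fwdCandidates (n p : ℕ) : List ℕ :=
  List.range' (p + 1) (n - p)

/-- The spot in which a car with preference `p` parks under the `k`-Naples rule on a
one-way street with `n` spots, given the set `occ` of already occupied spots
(`none` if the car fails to park). -/
def naplesStep (k n : ℕ) (occ : Finset ℕ) (p : ℕ) : Option ℕ :=
  if p ∈ occ then
    match (backCandidates k p).filter (fun s => decide (s ∉ occ)) with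
    | s :: _ => some s
    | [] =>
      match (fwdCandidates n p).filter (fun s => decide (s ∉ occ)) with
      | s :: _ => some s
      | [] => none
  else some p

/-- Runs the `k`-Naples parking process starting from occupied set `occ` for cars with
the given list of preferences.  Returns the list of spots in which the successive cars
park, or `none` if some car fails to park. -/
def naplesSpots (k n : ℕ) : Finset ℕ → List ℕ → Option (List ℕ)
  | _, [] => some []
  | occ, p :: rest =>
    match naplesStep k n occ p with
    | none => none
    | some s => (naplesSpots k n (insert s occ) rest).map (fun l => s :: l)

/-- All cars with the given preferences successfully park, starting from occupied set `occ`. -/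
def ParksAllFrom (k n : ℕ) (occ : Finset ℕ) (prefs : List ℕ) : Prop :=
  (naplesSpots k n occ prefs).isSome

/-- A parking preference of length `n`: a list of `n` numbers in `{1, …, n}`. -/
def IsParkingPref (n : ℕ) (prefs : List ℕ) : Prop :=
  prefs.length = n ∧ ∀ p ∈ prefs, 1 ≤ p ∧ p ≤ n

/-- A `k`-Naples parking function of length `n`. -/
def IsNaplesPF (k n : ℕ) (prefs : List ℕ) : Prop :=
  IsParkingPref n prefs ∧ ParksAllFrom k n ∅ prefs

lemma find?_eq_head?_filter (q : ℕ → Bool) (l : List ℕ) :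
    l.find? q = (l.filter q).head? := by
  induction l with
  | nil => rfl
  | cons a t ih =>
    by_cases h : q a = true
    · rw [List.find?_cons_of_pos h, List.filter_cons_of_pos h, List.head?_cons]
    · simp only [Bool.not_eq_true] at h
      rw [List.find?_cons_of_neg (by simp [h]), List.filter_cons_of_neg (by simp [h]), ih]

lemma mem_backCandidates {k p t : ℕ} :
    t ∈ backCandidates k p ↔ 1 ≤ t ∧ p - k ≤ t ∧ t < p := by
  simp only [backCandidates, List.mem_filter, List.mem_map, List.mem_range, decide_eq_true_eq]
  constructor
  · rintro ⟨⟨i, hi, rfl⟩, h1⟩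
    omega
  · rintro ⟨h1, h2, h3⟩
    exact ⟨⟨p - t - 1, by omega, by omega⟩, h1⟩

lemma pairwise_backCandidates (k p : ℕ) :
    (backCandidates k p).Pairwise (· > ·) := by
  rw [backCandidates, List.pairwise_filter]
  rw [List.pairwise_map]
  refine (List.pairwise_lt_range (n := k)).imp_of_mem ?_
  intro a b _ _ hab _ hb
  simp only [decide_eq_true_eq] at *
  omega

lemma mem_fwdCandidates {n p t : ℕ} :
    t ∈ fwdCandidates n p ↔ p < t ∧ t ≤ n := by
  simp only [fwdCandidates, List.mem_range'_1]
  omega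

lemma pairwise_fwdCandidates (n p : ℕ) :
    (fwdCandidates n p).Pairwise (· < ·) := List.pairwise_lt_range' (s := p + 1) (n := n - p)

lemma find?_sorted {r : ℕ → ℕ → Prop} (hr : ∀ x y, r x y → ¬ r y x)
    (q : ℕ → Bool) {l : List ℕ} (hl : l.Pairwise r) (a : ℕ) :
    l.find? q = some a ↔ a ∈ l ∧ q a = true ∧ ∀ b ∈ l, r b a → q b = false := by
  induction l with
  | nil => simp
  | cons c t ih =>
    rw [List.pairwise_cons] at hl
    by_cases hc : q c = true
    · simp only [List.find?, hc, Option.some.injEq, List.mem_cons]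
      constructor
      · rintro rfl
        refine ⟨Or.inl rfl, hc, ?_⟩
        rintro b (rfl | hb) hba
        · exact absurd hba (hr _ _ hba)
        · exact absurd hba (hr _ _ (hl.1 b hb))
      · rintro ⟨(rfl | ha), _, hall⟩
        · rfl
        · have := hall c (Or.inl rfl) (hl.1 a ha)
          rw [hc] at this; exact absurd this (by simp)
    · simp only [Bool.not_eq_true] at hc
      simp only [List.find?, hc]
      rw [ih hl.2]
      constructor
      · rintro ⟨ha, hqa, hall⟩
        refine ⟨List.mem_cons_of_mem _ ha, hqa, ?_⟩
        intro b hb hba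
        rcases List.mem_cons.mp hb with rfl | hb
        · exact hc
        · exact hall b hb hba
      · rintro ⟨ha, hqa, hall⟩
        rcases List.mem_cons.mp ha with rfl | ha
        · rw [hqa] at hc; exact absurd hc (by simp)
        · exact ⟨ha, hqa, fun b hb hba => hall b (List.mem_cons_of_mem _ hb) hba⟩

section Spec
variable {k n p s : ℕ} {O : Finset ℕ}

lemma back_find_some :
    (backCandidates k p).find? (fun t => decide (t ∉ O)) = some s ↔
      (s ∉ O ∧ 1 ≤ s ∧ p - k ≤ s ∧ s < p ∧ ∀ t, s < t → t < p → t ∈ O) := by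
  rw [find?_sorted (r := (· > ·)) (fun x y h => by omega) _ (pairwise_backCandidates k p)]
  constructor
  · rintro ⟨hmem, hq, hall⟩
    rw [mem_backCandidates] at hmem
    simp only [decide_eq_true_eq] at hq
    refine ⟨hq, hmem.1, hmem.2.1, hmem.2.2, ?_⟩
    intro t hst htp
    have ht : t ∈ backCandidates k p := mem_backCandidates.mpr ⟨by omega, by omega, htp⟩
    have := hall t ht hst
    simpa using this
  · rintro ⟨hsO, h1, h2, h3, hall⟩
    refine ⟨mem_backCandidates.mpr ⟨h1, h2, h3⟩, by simpa using hsO, ?_⟩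
    intro b hb hbs
    rw [mem_backCandidates] at hb
    simpa using hall b hbs hb.2.2

lemma back_find_none :
    (backCandidates k p).find? (fun t => decide (t ∉ O)) = none ↔
      ∀ t, 1 ≤ t → p - k ≤ t → t < p → t ∈ O := by
  rw [List.find?_eq_none]
  constructor
  · intro h t h1 h2 h3
    have := h t (mem_backCandidates.mpr ⟨h1, h2, h3⟩)
    simpa using this
  · intro h t ht
    rw [mem_backCandidates] at ht
    simpa using h t ht.1 ht.2.1 ht.2.2

lemma fwd_find_some :
    (fwdCandidates n p).find? (fun t => decide (t ∉ O)) = some s ↔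
      (s ∉ O ∧ p < s ∧ s ≤ n ∧ ∀ t, p < t → t < s → t ∈ O) := by
  rw [find?_sorted (r := (· < ·)) (fun x y h => by omega) _ (pairwise_fwdCandidates n p)]
  constructor
  · rintro ⟨hmem, hq, hall⟩
    rw [mem_fwdCandidates] at hmem
    simp only [decide_eq_true_eq] at hq
    refine ⟨hq, hmem.1, hmem.2, ?_⟩
    intro t hpt hts
    have ht : t ∈ fwdCandidates n p := mem_fwdCandidates.mpr ⟨hpt, by omega⟩
    simpa using hall t ht hts
  · rintro ⟨hsO, h1, h2, hall⟩
    refine ⟨mem_fwdCandidates.mpr ⟨h1, h2⟩, by simpa using hsO, ?_⟩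
    intro b hb hbs
    rw [mem_fwdCandidates] at hb
    simpa using hall b hb.1 hbs

def StepSpec (k n : ℕ) (O : Finset ℕ) (p s : ℕ) : Prop :=
  (p ∉ O ∧ s = p) ∨
  (p ∈ O ∧ s ∉ O ∧ 1 ≤ s ∧ p - k ≤ s ∧ s < p ∧ ∀ t, s < t → t < p → t ∈ O) ∨
  (p ∈ O ∧ (∀ t, 1 ≤ t → p - k ≤ t → t < p → t ∈ O) ∧
    s ∉ O ∧ p < s ∧ s ≤ n ∧ ∀ t, p < t → t < s → t ∈ O)

lemma step_spec :
    naplesStep k n O p = some s ↔ StepSpec k n O p s := by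
  unfold naplesStep StepSpec
  by_cases hp : p ∈ O
  · rw [if_pos hp]
    cases hB : (backCandidates k p).filter (fun t => decide (t ∉ O)) with
    | cons s0 tl =>
      have hfB : (backCandidates k p).find? (fun t => decide (t ∉ O)) = some s0 := by
        rw [find?_eq_head?_filter, hB]; rfl
      rw [back_find_some] at hfB
      simp only [Option.some.injEq]
      constructor
      · rintro rfl
        exact Or.inr (Or.inl ⟨hp, hfB⟩)
      · rintro (⟨h, _⟩ | ⟨_, hsO, h1, h2, h3, hall⟩ | ⟨_, hw, _⟩)
        · exact absurd hp h
        · -- s also satisfies back_find_some, so s = s0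
          have : (backCandidates k p).find? (fun t => decide (t ∉ O)) = some s :=
            back_find_some.mpr ⟨hsO, h1, h2, h3, hall⟩
          rw [find?_eq_head?_filter, hB] at this
          exact (Option.some.injEq _ _ ▸ this).symm ▸ rfl
        · -- window all occupied contradicts s0 free in window
          exact absurd (hw s0 hfB.2.1 hfB.2.2.1 hfB.2.2.2.1) hfB.1
    | nil =>
      have hfB : (backCandidates k p).find? (fun t => decide (t ∉ O)) = none := by
        rw [find?_eq_head?_filter, hB]; rfl
      rw [back_find_none] at hfB
      cases hF : (fwdCandidates n p).filter (fun t => decide (t ∉ O)) with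
      | cons s0 tl =>
        have hfF : (fwdCandidates n p).find? (fun t => decide (t ∉ O)) = some s0 := by
          rw [find?_eq_head?_filter, hF]; rfl
        rw [fwd_find_some] at hfF
        simp only [Option.some.injEq]
        constructor
        · rintro rfl
          exact Or.inr (Or.inr ⟨hp, hfB, hfF⟩)
        · rintro (⟨h, _⟩ | ⟨_, hsO, h1, h2, h3, _⟩ | ⟨_, _, hsO, h1, h2, hall⟩)
          · exact absurd hp h
          · exact absurd (hfB s h1 h2 h3) hsO
          · have : (fwdCandidates n p).find? (fun t => decide (t ∉ O)) = some s :=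
              fwd_find_some.mpr ⟨hsO, h1, h2, hall⟩
            rw [find?_eq_head?_filter, hF] at this
            simp only [List.head?_cons, Option.some.injEq] at this
            omega
      | nil =>
        have hfF : (fwdCandidates n p).find? (fun t => decide (t ∉ O)) = none := by
          rw [find?_eq_head?_filter, hF]; rfl
        constructor
        · intro h; exact absurd h (by simp)
        · rintro (⟨h, _⟩ | ⟨_, hsO, h1, h2, h3, hall⟩ | ⟨_, _, hsO, h1, h2, hall⟩)
          · exact absurd hp h
          · have : (backCandidates k p).find? (fun t => decide (t ∉ O)) = some s :=
              back_find_some.mpr ⟨hsO, h1, h2, h3, hall⟩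
            rw [find?_eq_head?_filter, hB] at this
            simp at this
          · have : (fwdCandidates n p).find? (fun t => decide (t ∉ O)) = some s :=
              fwd_find_some.mpr ⟨hsO, h1, h2, hall⟩
            rw [find?_eq_head?_filter, hF] at this
            simp at this
  · rw [if_neg hp]
    simp only [Option.some.injEq]
    constructor
    · rintro rfl
      exact Or.inl ⟨hp, rfl⟩
    · rintro (⟨_, rfl⟩ | ⟨h, _⟩ | ⟨h, _⟩)
      · rfl
      · exact absurd h hp
      · exact absurd h hp

end Spec

section Claims
variable {k n p s s' e e' : ℕ} {O : Finset ℕ}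

private lemma hmem (e e' : ℕ) (O : Finset ℕ) (x : ℕ) :
    x ∈ insert e' (O.erase e) ↔ x = e' ∨ (x ≠ e ∧ x ∈ O) := by
  rw [Finset.mem_insert, Finset.mem_erase]

private lemma not_mem' {x : ℕ} (h : x ∉ insert e' (O.erase e)) :
    x ≠ e' ∧ (x = e ∨ x ∉ O) := by
  rw [hmem] at h; push_neg at h
  refine ⟨h.1, ?_⟩
  rcases eq_or_ne x e with hh | hh
  · exact Or.inl hh
  · exact Or.inr (h.2 hh)

lemma step_isSome (k n : ℕ) (O : Finset ℕ) (p t : ℕ) (hpn : p ≤ n)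
    (ht : t ∉ O) (h1 : 1 ≤ t) (h2 : p - k ≤ t) (h3 : t ≤ n) :
    ∃ s, naplesStep k n O p = some s := by
  by_cases hp : p ∈ O
  · by_cases hw : ∃ u, 1 ≤ u ∧ p - k ≤ u ∧ u < p ∧ u ∉ O
    · obtain ⟨u, hu1, hu2, hu3, hu4⟩ := hw
      have hub : u ≤ p - 1 := by omega
      have hPu : p - k ≤ u ∧ 1 ≤ u ∧ u ∉ O := ⟨hu2, hu1, hu4⟩
      have hs := Nat.findGreatest_spec (P := fun v => p - k ≤ v ∧ 1 ≤ v ∧ v ∉ O) hub hPu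
      have hsle : Nat.findGreatest (fun v => p - k ≤ v ∧ 1 ≤ v ∧ v ∉ O) (p - 1) ≤ p - 1 :=
        Nat.findGreatest_le _
      refine ⟨_, step_spec.mpr (Or.inr (Or.inl ⟨hp, hs.2.2, hs.2.1, hs.1, by omega, ?_⟩))⟩
      intro v hsv hvp
      by_contra hvO
      exact Nat.findGreatest_is_greatest hsv (by omega) ⟨by omega, by omega, hvO⟩
    · push_neg at hw
      have htp : p < t := by
        rcases lt_trichotomy t p with h | h | h
        · exact absurd (hw t h1 h2 h) ht
        · exact absurd (h ▸ hp) ht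
        · exact h
      have hex : ∃ u, p < u ∧ u ∉ O := ⟨t, htp, ht⟩
      have hs := Nat.find_spec hex
      have hst : Nat.find hex ≤ t := Nat.find_min' hex ⟨htp, ht⟩
      refine ⟨Nat.find hex, step_spec.mpr (Or.inr (Or.inr
        ⟨hp, hw, hs.2, hs.1, by omega, ?_⟩))⟩
      intro v hpv hvs
      have := Nat.find_min hex hvs
      push_neg at this
      exact this hpv
  · exact ⟨p, step_spec.mpr (Or.inl ⟨hp, rfl⟩)⟩

lemma claim_i (heO : e ∈ O) (he'O : e' ∉ O) (hlt : e' < e)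
    (hs : StepSpec k n O p s) (hs' : StepSpec k n (insert e' (O.erase e)) p s')
    (h1 : s ≠ e') (h2 : s' ≠ e) : s' = s := by
  rcases hs with ⟨hpO, hsp⟩ | ⟨hpO, hsO, hb1, hb2, hb3, hall⟩ |
      ⟨hpO, hw, hsO, hf1, hf2, hall⟩ <;>
    rcases hs' with ⟨hpO', hs'p⟩ | ⟨hpO', hsO', hb1', hb2', hb3', hall'⟩ |
      ⟨hpO', hw', hsO', hf1', hf2', hall'⟩
  · omega
  · rcases (hmem e e' O p).mp hpO' with h | h
    · exact absurd (hsp.trans h) h1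
    · exact absurd h.2 hpO
  · rcases (hmem e e' O p).mp hpO' with h | h
    · exact absurd (hsp.trans h) h1
    · exact absurd h.2 hpO
  · exfalso
    rcases (not_mem' hpO').2 with h | h
    · exact h2 (hs'p.trans h)
    · exact h hpO
  · -- both backward
    rcases lt_trichotomy s s' with h | h | h
    · exfalso
      have hmemO : s' ∈ O := hall s' h hb3'
      rcases (not_mem' hsO').2 with h' | h'
      · exact h2 h'
      · exact h' hmemO
    · omega
    · exfalso
      rcases (hmem e e' O s).mp (hall' s h hb3) with h' | h'
      · exact h1 h'
      · exact hsO h'.2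
  · exfalso
    rcases (hmem e e' O s).mp (hw' s hb1 hb2 hb3) with h' | h'
    · exact h1 h'
    · exact hsO h'.2
  · exfalso
    rcases (not_mem' hpO').2 with h | h
    · exact h2 (hs'p.trans h)
    · exact h hpO
  · exfalso
    have hmemO : s' ∈ O := hw s' hb1' hb2' hb3'
    rcases (not_mem' hsO').2 with h' | h'
    · exact h2 h'
    · exact h' hmemO
  · -- both forward
    rcases lt_trichotomy s s' with h | h | h
    · exfalso
      rcases (hmem e e' O s).mp (hall' s hf1 h) with h' | h'
      · exact h1 h'
      · exact hsO h'.2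
    · omega
    · exfalso
      have hmemO : s' ∈ O := hall s' hf1' h
      rcases (not_mem' hsO').2 with h' | h'
      · exact h2 h'
      · exact h' hmemO

lemma claim_ii (heO : e ∈ O) (he'O : e' ∉ O) (hlt : e' < e) (hen : e ≤ n)
    (hs : StepSpec k n O p e') (hs' : StepSpec k n (insert e' (O.erase e)) p s')
    (h2 : s' ≠ e) : s' < e := by
  have he'O' : e' ∈ insert e' (O.erase e) := (hmem e e' O e').mpr (Or.inl rfl)
  have heO' : e ∉ insert e' (O.erase e) := by
    rw [hmem]; push_neg; exact ⟨by omega, fun h => absurd rfl h⟩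
  rcases hs with ⟨hpO, hpe'⟩ | ⟨hpO, hsO, hb1, hb2, hb3, hall⟩ |
      ⟨hpO, hw, hsO, hf1, hf2, hall⟩ <;>
    rcases hs' with ⟨hpO', hs'p⟩ | ⟨hpO', hsO', hb1', hb2', hb3', hall'⟩ |
      ⟨hpO', hw', hsO', hf1', hf2', hall'⟩
  · exact absurd (hpe' ▸ he'O') hpO'
  · omega
  · -- forward from p = e'
    rcases lt_trichotomy s' e with h | h | h
    · exact h
    · exact absurd h h2
    · exact absurd (hall' e (by omega) h) heO'
  · exfalso
    rcases (not_mem' hpO').2 with h | h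
    · omega
    · exact h hpO
  · -- both backward
    rcases lt_trichotomy s' e with h | h | h
    · exact h
    · exact absurd h h2
    · exfalso
      have hs'O : s' ∈ O := hall s' (by omega) hb3'
      rcases (not_mem' hsO').2 with h' | h'
      · exact h2 h'
      · exact h' hs'O
  · -- hs backward (s = e' < p), hs' forward
    have hpe : p ≠ e := fun h => heO' (h ▸ hpO')
    rcases lt_trichotomy e p with h | h | h
    · exact absurd (hw' e (by omega) (by omega) h) heO'
    · exact absurd h.symm hpe
    · rcases lt_trichotomy s' e with h' | h' | h'
      · exact h'
      · exact absurd h' h2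
      · exact absurd (hall' e h h') heO'
  · exfalso
    rcases (not_mem' hpO').2 with h | h
    · omega
    · exact h hpO
  · omega
  · rcases lt_trichotomy s' e with h' | h' | h'
    · exact h'
    · exact absurd h' h2
    · exact absurd (hall' e (by omega) h') heO'

lemma claim_iii (heO : e ∈ O) (he'O : e' ∉ O) (hlt : e' < e)
    (hs : StepSpec k n O p s) (hs' : StepSpec k n (insert e' (O.erase e)) p e)
    (h1 : s ≠ e') : e' < s := by
  have he'O' : e' ∈ insert e' (O.erase e) := (hmem e e' O e').mpr (Or.inl rfl)
  have heO' : e ∉ insert e' (O.erase e) := by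
    rw [hmem]; push_neg; exact ⟨by omega, fun h => absurd rfl h⟩
  rcases hs with ⟨hpO, hsp⟩ | ⟨hpO, hsO, hb1, hb2, hb3, hall⟩ |
      ⟨hpO, hw, hsO, hf1, hf2, hall⟩
  · -- p ∉ O, s = p
    exfalso
    rcases hs' with ⟨hpO', hpe⟩ | ⟨hpO', _⟩ | ⟨hpO', _⟩
    · exact hpO (hpe ▸ heO)
    · rcases (hmem e e' O p).mp hpO' with h | h
      · exact h1 (hsp.trans h)
      · exact hpO h.2
    · rcases (hmem e e' O p).mp hpO' with h | h
      · exact h1 (hsp.trans h)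
      · exact hpO h.2
  · -- s backward in O
    by_contra hc
    push_neg at hc
    have h' : s < e' := by omega
    rcases lt_trichotomy e' p with hp' | hp' | hp'
    · exact he'O (hall e' h' hp')
    · exact he'O (hp' ▸ hpO)
    · rcases hs' with ⟨hpO', hpe⟩ | ⟨_, _, _, _, hb3', _⟩ | ⟨_, hw', _, _, _, _⟩
      · omega
      · omega
      · rcases (hmem e e' O s).mp (hw' s hb1 hb2 hb3) with h'' | h''
        · exact h1 h''
        · exact hsO h''.2
  · -- s forward in O
    by_contra hc
    push_neg at hc
    have h' : s < e' := by omega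
    rcases hs' with ⟨hpO', hpe⟩ | ⟨_, _, _, _, hb3', _⟩ | ⟨_, _, _, hf1', _, hall'⟩
    · omega
    · omega
    · rcases (hmem e e' O s).mp (hall' s hf1 (by omega)) with h'' | h''
      · exact h1 h''
      · exact hsO h''.2

end Claims

def NRel (n : ℕ) (O O' : Finset ℕ) : Prop :=
  O = O' ∨ ∃ e e', e ∈ O ∧ e' ∉ O ∧ e' < e ∧ e ≤ n ∧ O' = insert e' (O.erase e)

lemma spec_facts {k n p s : ℕ} {O : Finset ℕ} (hp1 : 1 ≤ p) (hpn : p ≤ n)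
    (h : StepSpec k n O p s) : s ∉ O ∧ 1 ≤ s ∧ p - k ≤ s ∧ s ≤ n := by
  rcases h with ⟨hpO, hsp⟩ | ⟨_, a, b, c, d, _⟩ | ⟨_, _, a, b, c, _⟩
  · exact ⟨hsp ▸ hpO, by omega, by omega, by omega⟩
  · exact ⟨a, b, c, by omega⟩
  · exact ⟨a, by omega, by omega, c⟩

lemma insert_back {e e' : ℕ} {O : Finset ℕ} (heO : e ∈ O) :
    insert e (insert e' (O.erase e)) = insert e' O := by
  rw [Finset.insert_comm, Finset.insert_erase heO]

lemma step_rel {k n : ℕ} {O O' : Finset ℕ} (h : NRel n O O') {p s : ℕ}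
    (hp1 : 1 ≤ p) (hpn : p ≤ n) (hs : naplesStep k n O p = some s) :
    ∃ s', naplesStep k n O' p = some s' ∧ NRel n (insert s O) (insert s' O') := by
  rcases h with rfl | ⟨e, e', heO, he'O, hlt, hen, rfl⟩
  · exact ⟨s, hs, Or.inl rfl⟩
  have hspec := step_spec.mp hs
  obtain ⟨hsO, hs1, hskp, hsn⟩ := spec_facts hp1 hpn hspec
  by_cases hse : s = e'
  · -- witness e
    have heO' : e ∉ insert e' (O.erase e) := by
      rw [hmem]; push_neg; exact ⟨by omega, fun h => absurd rfl h⟩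
    obtain ⟨s', hstep'⟩ :=
      step_isSome k n (insert e' (O.erase e)) p e hpn heO' (by omega) (by omega) hen
    have hspec' := step_spec.mp hstep'
    obtain ⟨hs'O', hs'1, hs'kp, hs'n⟩ := spec_facts hp1 hpn hspec'
    refine ⟨s', hstep', ?_⟩
    by_cases hs'e : s' = e
    · left
      rw [hse, hs'e, insert_back heO]
    · right
      refine ⟨e, s', Finset.mem_insert_of_mem heO, ?_,
        claim_ii heO he'O hlt hen (hse ▸ hspec) hspec' hs'e, hen, ?_⟩
      · rw [Finset.mem_insert]
        push_neg
        obtain ⟨h1', h2'⟩ := not_mem' hs'O'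
        refine ⟨by omega, ?_⟩
        rcases h2' with h | h
        · exact absurd h hs'e
        · exact h
      · rw [hse, Finset.erase_insert_of_ne (show e' ≠ e by omega)]
  · -- witness s
    have hsO' : s ∉ insert e' (O.erase e) := by
      rw [hmem]; push_neg; exact ⟨hse, fun _ => hsO⟩
    obtain ⟨s', hstep'⟩ :=
      step_isSome k n (insert e' (O.erase e)) p s hpn hsO' hs1 hskp hsn
    have hspec' := step_spec.mp hstep'
    refine ⟨s', hstep', ?_⟩
    by_cases hs'e : s' = e
    · right
      have he's := claim_iii heO he'O hlt hspec (hs'e ▸ hspec') hse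
      refine ⟨s, e', Finset.mem_insert_self _ _, ?_, he's, hsn, ?_⟩
      · rw [Finset.mem_insert]; push_neg; exact ⟨by omega, he'O⟩
      · rw [Finset.erase_insert hsO, hs'e, insert_back heO]
    · have hss := claim_i heO he'O hlt hspec hspec' hse hs'e
      right
      refine ⟨e, e', Finset.mem_insert_of_mem heO, ?_, hlt, hen, ?_⟩
      · rw [Finset.mem_insert]; push_neg; exact ⟨by omega, he'O⟩
      · have hne : s ≠ e := fun h => hsO (h ▸ heO)
        rw [hss, Finset.erase_insert_of_ne hne, Finset.insert_comm]

lemma spots_rel {k n : ℕ} : ∀ (prefs : List ℕ) (O O' : Finset ℕ), NRel n O O' →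
    (∀ q ∈ prefs, 1 ≤ q ∧ q ≤ n) → ∀ d, naplesSpots k n O prefs = some d →
    (naplesSpots k n O' prefs).isSome := by
  intro prefs
  induction prefs with
  | nil => intro O O' _ _ d _; simp [naplesSpots]
  | cons q rest ih =>
    intro O O' hrel hb d hsome
    rw [naplesSpots] at hsome
    cases hstep : naplesStep k n O q with
    | none => rw [hstep] at hsome; exact absurd hsome (by simp)
    | some s =>
      rw [hstep] at hsome
      simp only [Option.map_eq_some_iff] at hsome
      obtain ⟨tail, htail, _⟩ := hsome
      obtain ⟨q1, q2⟩ := hb q (List.mem_cons_self)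
      obtain ⟨s', hstep', hrel'⟩ := step_rel hrel q1 q2 hstep
      have := ih (insert s O) (insert s' O') hrel'
        (fun x hx => hb x (List.mem_cons_of_mem _ hx)) tail htail
      rw [naplesSpots, hstep']
      rw [Option.isSome_map]
      exact this

lemma spots_drop {k n : ℕ} : ∀ (i : ℕ) (prefs : List ℕ) (O : Finset ℕ) (d : List ℕ),
    naplesSpots k n O prefs = some d →
    naplesSpots k n (O ∪ (d.take i).toFinset) (prefs.drop i) = some (d.drop i) := by
  intro i
  induction i with
  | zero => intro prefs O d h; simpa using h
  | succ i ih =>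
    intro prefs O d h
    cases prefs with
    | nil =>
      rw [naplesSpots] at h
      have : d = [] := by simpa using h.symm
      subst this
      simp [naplesSpots]
    | cons q rest =>
      rw [naplesSpots] at h
      cases hstep : naplesStep k n O q with
      | none => rw [hstep] at h; exact absurd h (by simp)
      | some s =>
        rw [hstep] at h
        simp only [Option.map_eq_some_iff] at h
        obtain ⟨tail, htail, rfl⟩ := h
        have := ih rest (insert s O) tail htail
        simp only [List.take_succ_cons, List.toFinset_cons, List.drop_succ_cons]
        rw [Finset.union_insert]  -- O ∪ insert s X = insert s (O ∪ X)?
        rw [show insert s (O ∪ (tail.take i).toFinset) = insert s O ∪ (tail.take i).toFinset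
          from (Finset.insert_union _ _ _).symm]
        exact this

lemma spots_props {k n : ℕ} : ∀ (prefs : List ℕ) (O : Finset ℕ) (d : List ℕ),
    naplesSpots k n O prefs = some d →
    d.length = prefs.length ∧ d.Nodup ∧ (∀ x ∈ d, x ∉ O) ∧
      ((∀ q ∈ prefs, 1 ≤ q ∧ q ≤ n) → ∀ x ∈ d, 1 ≤ x ∧ x ≤ n) := by
  intro prefs
  induction prefs with
  | nil =>
    intro O d h
    rw [naplesSpots] at h
    have : d = [] := by simpa using h.symm
    subst this; simp
  | cons q rest ih =>
    intro O d h
    rw [naplesSpots] at h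
    cases hstep : naplesStep k n O q with
    | none => rw [hstep] at h; exact absurd h (by simp)
    | some s =>
      rw [hstep] at h
      simp only [Option.map_eq_some_iff] at h
      obtain ⟨tail, htail, rfl⟩ := h
      obtain ⟨hlen, hnd, hnotmem, hbd⟩ := ih (insert s O) tail htail
      have hspec := step_spec.mp hstep
      have hsO : s ∉ O := by
        rcases hspec with ⟨hpO, hsp⟩ | ⟨_, a, _⟩ | ⟨_, _, a, _⟩
        · exact hsp ▸ hpO
        · exact a
        · exact a
      refine ⟨by simp [hlen], ?_, ?_, ?_⟩
      · rw [List.nodup_cons]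
        exact ⟨fun hmem => (hnotmem s hmem) (Finset.mem_insert_self _ _), hnd⟩
      · intro x hx
        rcases List.mem_cons.mp hx with rfl | hx
        · exact hsO
        · exact fun hxO => (hnotmem x hx) (Finset.mem_insert_of_mem hxO)
      · intro hb x hx
        obtain ⟨q1, q2⟩ := hb q (List.mem_cons_self)
        rcases List.mem_cons.mp hx with rfl | hx
        · obtain ⟨_, b, c, dd⟩ := spec_facts q1 q2 hspec
          exact ⟨b, dd⟩
        · exact hbd (fun y hy => hb y (List.mem_cons_of_mem _ hy)) x hx

private lemma mem_getD {l : List ℕ} {x : ℕ} : x ∈ l ↔ ∃ j, j < l.length ∧ l.getD j 0 = x := by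
  rw [List.mem_iff_getElem]
  constructor
  · rintro ⟨j, hj, rfl⟩
    exact ⟨j, hj, List.getD_eq_getElem _ _ hj⟩
  · rintro ⟨j, hj, hx⟩
    exact ⟨j, hj, by rw [← List.getD_eq_getElem _ _ hj]; exact hx⟩

private lemma getD_inj {l : List ℕ} (hnd : l.Nodup) {j1 j2 : ℕ}
    (h1 : j1 < l.length) (h2 : j2 < l.length) (he : l.getD j1 0 = l.getD j2 0) : j1 = j2 := by
  rw [List.getD_eq_getElem _ _ h1, List.getD_eq_getElem _ _ h2] at he
  exact (List.Nodup.getElem_inj_iff hnd).mp he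


/-- Lemma on modified occupied configurations.
If `(a_1,…,a_n)` is a `k`-Naples parking function under which car `c_j` parks in spot `d_j`,
`1 ≤ i ≤ n`, and `p_1,…,p_i` are distinct spots in `{1,…,n}` with `p_j = d_j` for every
`j ≤ i` except exactly one index `l ≤ i` for which `p_l < d_l`, then starting from the
configuration in which spots `p_1,…,p_i` are occupied, the cars `c_{i+1},…,c_n` with
preferences `a_{i+1},…,a_n` all successfully park under the `k`-Naples rule. -/
theorem statement0 (k n : ℕ) (a d : List ℕ)
    (ha : IsParkingPref n a) (hd : naplesSpots k n ∅ a = some d)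
    (i : ℕ) (hi1 : 1 ≤ i) (hin : i ≤ n)
    (p : List ℕ) (hplen : p.length = i) (hpnd : p.Nodup)
    (hpmem : ∀ x ∈ p, 1 ≤ x ∧ x ≤ n)
    (l : ℕ) (hl : l < i)
    (hless : p.getD l 0 < d.getD l 0)
    (heq : ∀ j < i, j ≠ l → p.getD j 0 = d.getD j 0) :
    ParksAllFrom k n p.toFinset (a.drop i) := by
  obtain ⟨hdlen, hdnd, _, hdbd⟩ := spots_props a ∅ d hd
  have hdb := hdbd ha.2
  have hdlen' : d.length = n := by rw [hdlen, ha.1]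
  set q := d.take i with hqdef
  have hqlen : q.length = i := by rw [hqdef, List.length_take]; omega
  have hqnd : q.Nodup := hdnd.sublist (List.take_sublist _ _)
  have hqget : ∀ j, j < i → q.getD j 0 = d.getD j 0 := by
    intro j hj
    rw [List.getD_eq_getElem _ _ (by omega : j < q.length),
        List.getD_eq_getElem _ _ (by omega : j < d.length)]
    exact List.getElem_take
  set e := d.getD l 0 with hedef
  set e' := p.getD l 0 with he'def
  have heq' : e ∈ q := mem_getD.mpr ⟨l, by omega, hqget l hl⟩
  have he'p : e' ∈ p := mem_getD.mpr ⟨l, by omega, rfl⟩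
  have he'nq : e' ∉ q := by
    intro hmem
    obtain ⟨j, hj, hjx⟩ := mem_getD.mp hmem
    rw [hqlen] at hj
    rcases eq_or_ne j l with rfl | hjl
    · rw [hqget j hj] at hjx; omega
    · rw [hqget j hj, ← heq j hj hjl] at hjx
      exact hjl (getD_inj hpnd (by omega) (by omega) hjx)
  have hen : e ≤ n := (hdb e ((List.take_sublist _ _).subset heq')).2
  have hset : p.toFinset = insert e' (q.toFinset.erase e) := by
    ext x
    simp only [List.mem_toFinset, Finset.mem_insert, Finset.mem_erase]
    constructor
    · intro hx
      obtain ⟨j, hj, hjx⟩ := mem_getD.mp hx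
      rw [hplen] at hj
      rcases eq_or_ne j l with rfl | hjl
      · exact Or.inl hjx.symm
      · refine Or.inr ⟨?_, ?_⟩
        · intro hxe
          subst hxe
          have hjx2 : q.getD j 0 = q.getD l 0 := by
            rw [hqget j hj, ← heq j hj hjl, hjx, hedef, ← hqget l hl]
          exact hjl (getD_inj hqnd (by omega) (by omega) hjx2)
        · exact mem_getD.mpr ⟨j, by omega, by rw [hqget j hj, ← heq j hj hjl]; exact hjx⟩
    · rintro (rfl | ⟨hxe, hxq⟩)
      · exact he'p
      · obtain ⟨j, hj, hjx⟩ := mem_getD.mp hxq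
        rw [hqlen] at hj
        rcases eq_or_ne j l with rfl | hjl
        · rw [hqget j hj] at hjx; exact absurd hjx.symm hxe
        · exact mem_getD.mpr ⟨j, by omega, by rw [heq j hj hjl, ← hqget j hj]; exact hjx⟩
  have hrel : NRel n q.toFinset p.toFinset := by
    right
    exact ⟨e, e', List.mem_toFinset.mpr heq', fun h => he'nq (List.mem_toFinset.mp h),
      hless, hen, hset⟩
  have hdrop := spots_drop i a ∅ d hd
  rw [Finset.empty_union] at hdrop
  exact spots_rel (a.drop i) q.toFinset p.toFinset hrel
    (fun x hx => ha.2 x (List.mem_of_mem_drop hx)) (d.drop i) hdrop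
end

section
/- For all n ≥ 0, the number I_{n,1} of ascending 1-Naples parking functions of length n equals Σ_{i=0}^n C_i · F_{n−i}, the n-th term of the convolution of the Catalan numbers with the Fine numbers. -/
/-- `numAsc n k` is `I_{n,k}`, the number of ascending `k`-Naples parking functions of
length `n` (note `numAsc 0 k = 1`, the empty preference). -/
noncomputable def numAsc (n k : ℕ) : ℕ :=
  Set.ncard {f : List ℕ | IsNaplesPF k n f ∧ List.Pairwise (· ≤ ·) f}

/-- `numAscOne n k` is `U_{n,k}`, the number of ascending `k`-Naples parking functions of
length `n` whose first entry is `1` (note `numAscOne 0 k = 0`). -/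
noncomputable def numAscOne (n k : ℕ) : ℕ :=
  Set.ncard {f : List ℕ | IsNaplesPF k n f ∧ List.Pairwise (· ≤ ·) f ∧ f.head? = some 1}

-- basic step lemmas
lemma backCandidates_one (p : ℕ) :
    backCandidates 1 p = if 2 ≤ p then [p-1] else [] := by
  rcases p with _ | _ | p
  · simp [backCandidates]
  · simp [backCandidates]
  · rw [if_pos (by omega)]
    show List.filter _ (List.map _ (List.range 1)) = _
    have : List.range 1 = [0] := rfl
    rw [this]
    simp only [List.map_cons, List.map_nil, List.filter_cons]
    norm_num

lemma naplesStep_free {k n : ℕ} {occ : Finset ℕ} {p : ℕ} (h : p ∉ occ) :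
    naplesStep k n occ p = some p := by
  simp [naplesStep, h]

lemma naplesStep_clean {n i w : ℕ} (h1 : 1 ≤ w) (h2 : w ≤ i) (h3 : i < n) :
    naplesStep 1 n (Finset.Icc 1 i) w = some (i+1) := by
  have hw : w ∈ Finset.Icc 1 i := Finset.mem_Icc.2 ⟨h1, h2⟩
  have hback : (backCandidates 1 w).filter (fun s => decide (s ∉ Finset.Icc 1 i)) = [] := by
    rw [backCandidates_one]
    split
    · rw [List.filter_cons]
      have : w - 1 ∈ Finset.Icc 1 i := Finset.mem_Icc.2 ⟨by omega, by omega⟩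
      simp [this]
    · rfl
  have hsplit : fwdCandidates n w = List.range' (w+1) (i-w) ++ List.range' (i+1) (n-i) := by
    have h4 : n - w = (i - w) + (n - i) := by omega
    have h5 : w + 1 + (i - w) = i + 1 := by omega
    rw [fwdCandidates, h4, ← List.range'_append_1, h5]
  have hfwd : (fwdCandidates n w).filter (fun s => decide (s ∉ Finset.Icc 1 i)) =
      List.range' (i+1) (n-i) := by
    rw [hsplit, List.filter_append]
    rw [List.filter_eq_nil_iff.2, List.filter_eq_self.2, List.nil_append]
    · intro a ha
      rw [List.mem_range'] at ha
      simp only [decide_eq_true_iff]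
      intro hmem
      rw [Finset.mem_Icc] at hmem
      omega
    · intro a ha
      rw [List.mem_range'] at ha
      have : a ∈ Finset.Icc 1 i := Finset.mem_Icc.2 ⟨by omega, by omega⟩
      simp [this]
  have hrange : List.range' (i+1) (n-i) = (i+1) :: List.range' (i+2) (n-i-1) := by
    have : n - i = (n - i - 1) + 1 := by omega
    rw [this, List.range'_succ]
    congr 1
  rw [naplesStep, if_pos hw, hback, hfwd, hrange]

lemma naplesStep_gapped {n i : ℕ} :
    naplesStep 1 n (insert (i+2) (Finset.Icc 1 i)) (i+2) = some (i+1) := by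
  have hmem : (i+2) ∈ insert (i+2) (Finset.Icc 1 i) := Finset.mem_insert_self _ _
  have hback : (backCandidates 1 (i+2)).filter
      (fun s => decide (s ∉ insert (i+2) (Finset.Icc 1 i))) = [i+1] := by
    rw [backCandidates_one, if_pos (by omega)]
    have : (i + 2 - 1) ∉ insert (i+2) (Finset.Icc 1 i) := by
      simp only [Finset.mem_insert, Finset.mem_Icc]
      omega
    simp only [List.filter_cons, this, decide_not]
    simp
  rw [naplesStep, if_pos hmem, hback]

lemma naplesStep_cases {n : ℕ} {occ : Finset ℕ} {p s : ℕ}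
    (h : naplesStep 1 n occ p = some s) :
    s ∉ occ ∧ (s = p ∨ s = p - 1 ∨ p + 1 ≤ s) ∧ s ≤ max p n ∧ (1 ≤ p → 1 ≤ s) := by
  rw [naplesStep] at h
  split at h
  · rename_i hp
    rcases hb : (backCandidates 1 p).filter (fun s => decide (s ∉ occ)) with _ | ⟨b, bs⟩
    · rw [hb] at h
      rcases hf : (fwdCandidates n p).filter (fun s => decide (s ∉ occ)) with _ | ⟨f, fs⟩
      · rw [hf] at h; exact absurd h (by simp)
      · rw [hf] at h
        have hs : s = f := by injection h with h'; omega
        subst hs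
        have hmem : s ∈ (fwdCandidates n p).filter (fun s => decide (s ∉ occ)) := by
          rw [hf]; exact List.mem_cons_self
        rw [List.mem_filter] at hmem
        obtain ⟨hm, hdec⟩ := hmem
        rw [fwdCandidates, List.mem_range'] at hm
        obtain ⟨j, hj, hsj⟩ := hm
        refine ⟨by simpa using hdec, Or.inr (Or.inr (by omega)), by omega, by omega⟩
    · rw [hb] at h
      have hs : s = b := by injection h with h'; omega
      subst hs
      have hmem : s ∈ (backCandidates 1 p).filter (fun s => decide (s ∉ occ)) := by
        rw [hb]; exact List.mem_cons_self
      rw [List.mem_filter] at hmem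
      obtain ⟨hm, hdec⟩ := hmem
      rw [backCandidates_one] at hm
      split at hm
      · rename_i h2
        have : s = p - 1 := by simpa using hm
        refine ⟨by simpa using hdec, Or.inr (Or.inl this), by omega, by omega⟩
      · exact absurd hm (by simp)
  · rename_i hp
    have hs : s = p := by injection h with h'; omega
    subst hs
    exact ⟨hp, Or.inl rfl, by omega, fun h => h⟩

/-- Key structural properties of a successful parking run. -/
lemma naplesSpots_props {n : ℕ} :
    ∀ (l : List ℕ) (occ : Finset ℕ) (sp : List ℕ),
    naplesSpots 1 n occ l = some sp → (∀ p ∈ l, 1 ≤ p ∧ p ≤ n) →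
    sp.toFinset.card = l.length ∧ Disjoint sp.toFinset occ ∧
      sp.toFinset ⊆ Finset.Icc 1 n ∧
      ∀ g, (∀ p ∈ l, g + 2 ≤ p) → g ∉ sp.toFinset := by
  intro l
  induction l with
  | nil =>
    intro occ sp h _
    rw [naplesSpots] at h
    have : sp = [] := by injection h with h'; exact h'.symm
    subst this
    simp
  | cons p rest ih =>
    intro occ sp h hpre
    rw [naplesSpots] at h
    rcases hst : naplesStep 1 n occ p with _ | s
    · rw [hst] at h; exact absurd h (by simp)
    · rw [hst] at h
      change Option.map (fun l => s :: l) (naplesSpots 1 n (insert s occ) rest) = some sp at h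
      rcases hrest : naplesSpots 1 n (insert s occ) rest with _ | sp'
      · rw [hrest] at h; exact absurd h (by simp)
      · rw [hrest] at h
        have hsp : sp = s :: sp' := by
          simp only [Option.map_some] at h
          injection h with h'; exact h'.symm
        subst hsp
        obtain ⟨hcard, hdisj, hsub, hg⟩ := ih (insert s occ) sp' hrest
          (fun q hq => hpre q (List.mem_cons_of_mem _ hq))
        obtain ⟨hsocc, hscases, hsle, hsge⟩ := naplesStep_cases hst
        obtain ⟨hp1, hpn⟩ := hpre p (List.mem_cons_self)
        have hsnot : s ∉ sp'.toFinset := by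
          intro hmem
          exact (Finset.disjoint_left.1 hdisj hmem) (Finset.mem_insert_self _ _)
        have htf : (s :: sp').toFinset = insert s sp'.toFinset := by simp
        refine ⟨?_, ?_, ?_, ?_⟩
        · rw [htf, Finset.card_insert_of_notMem hsnot, hcard]; simp
        · rw [htf]
          rw [Finset.disjoint_left]
          intro a ha
          rcases Finset.mem_insert.1 ha with rfl | ha'
          · exact hsocc
          · exact fun hao => (Finset.disjoint_left.1 hdisj ha') (Finset.mem_insert_of_mem hao)
        · rw [htf]
          intro a ha
          rcases Finset.mem_insert.1 ha with rfl | ha'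
          · exact Finset.mem_Icc.2 ⟨hsge hp1, by omega⟩
          · exact hsub ha'
        · intro g hgl
          rw [htf]
          intro hmem
          rcases Finset.mem_insert.1 hmem with rfl | ha'
          · have := hgl p (List.mem_cons_self)
            omega
          · exact hg g (fun q hq => hgl q (List.mem_cons_of_mem _ hq)) ha'

/-- If there is a gap `g` that no future car can fill, parking must fail. -/
lemma fail_of_gap {n : ℕ} (g : ℕ) (l : List ℕ) (occ : Finset ℕ)
    (hocc : occ ⊆ Finset.Icc 1 n) (hg1 : 1 ≤ g) (hgn : g ≤ n) (hgocc : g ∉ occ)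
    (hl : ∀ p ∈ l, g + 2 ≤ p ∧ p ≤ n)
    (hcard : n ≤ occ.card + l.length) :
    ¬ (naplesSpots 1 n occ l).isSome := by
  intro hsome
  rw [Option.isSome_iff_exists] at hsome
  obtain ⟨sp, hsp⟩ := hsome
  obtain ⟨hcardsp, hdisj, hsub, hgsp⟩ := naplesSpots_props l occ sp hsp
    (fun p hp => ⟨by have := (hl p hp).1; omega, (hl p hp).2⟩)
  have hgnot : g ∉ sp.toFinset := hgsp g (fun p hp => (hl p hp).1)
  set T := occ ∪ sp.toFinset with hT
  have hTcard : T.card = occ.card + l.length := by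
    rw [hT, Finset.card_union_of_disjoint hdisj.symm, hcardsp]
  have hTsub : T ⊆ (Finset.Icc 1 n).erase g := by
    intro a ha
    rcases Finset.mem_union.1 ha with h1 | h2
    · exact Finset.mem_erase.2 ⟨fun he => hgocc (he ▸ h1), hocc h1⟩
    · exact Finset.mem_erase.2 ⟨fun he => hgnot (he ▸ h2), hsub h2⟩
  have hle := Finset.card_le_card hTsub
  rw [Finset.card_erase_of_mem (Finset.mem_Icc.2 ⟨hg1, hgn⟩), Nat.card_Icc] at hle
  omega

/-- The transfer-matrix count: `cnt m d` counts valid ascending `1`-Naples tails with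
`m` cars remaining and slack `d`. -/
def cnt : ℕ → ℕ → ℕ
  | 0, _ => 1
  | 1, d => ∑ j ∈ Finset.range (d+1), cnt 0 (j+1)
  | m+2, d => (∑ j ∈ Finset.range (d+1), cnt (m+1) (j+1)) + cnt m 1

/-- The finite set of valid ascending tails: `m` cars remaining, `i` spots filled
(`occ = Icc 1 i`), last preference `v`. -/
def FS (n : ℕ) : ℕ → ℕ → ℕ → Finset (List ℕ)
  | 0, _, _ => {[]}
  | 1, i, v => (Finset.Icc v (i+1)).biUnion fun w => (FS n 0 (i+1) w).image (w :: ·)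
  | m+2, i, v =>
    ((Finset.Icc v (i+1)).biUnion fun w => (FS n (m+1) (i+1) w).image (w :: ·))
      ∪ (FS n m (i+2) (i+2)).image fun t => (i+2) :: (i+2) :: t

lemma biUnion_disj (n m i : ℕ) (w w' : ℕ) (hne : w ≠ w') :
    Disjoint ((FS n m (i+1) w).image (w :: ·)) ((FS n m (i+1) w').image (w' :: ·)) := by
  rw [Finset.disjoint_left]
  intro l hl hl'
  simp only [Finset.mem_image] at hl hl'
  obtain ⟨t, _, rfl⟩ := hl
  obtain ⟨t', _, he⟩ := hl'
  exact hne (by injection he with h1 _; exact h1.symm)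

lemma card_biUnion_FS (n m i v : ℕ) (hv : v ≤ i + 1)
    (ih : ∀ w, w ≤ i + 2 → (FS n m (i+1) w).card = cnt m (i + 2 - w)) :
    ((Finset.Icc v (i+1)).biUnion fun w => (FS n m (i+1) w).image (w :: ·)).card
      = ∑ j ∈ Finset.range ((i + 1 - v) + 1), cnt m (j+1) := by
  rw [Finset.card_biUnion]
  · rw [← Finset.Ico_add_one_right_eq_Icc, Finset.sum_Ico_eq_sum_range]
    have hsize : i + 1 + 1 - v = (i + 1 - v) + 1 := by omega
    rw [hsize, ← Finset.sum_range_reflect]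
    apply Finset.sum_congr rfl
    intro j hj
    rw [Finset.mem_range] at hj
    rw [Finset.card_image_of_injective _ (List.cons_injective)]
    rw [ih (v + (i + 1 - v + 1 - 1 - j)) (by omega)]
    congr 1
    omega
  · intro w _ w' _ hne
    exact biUnion_disj n m i w w' hne

lemma card_FS (n : ℕ) : ∀ (m i v : ℕ), v ≤ i + 1 → (FS n m i v).card = cnt m (i + 1 - v) := by
  intro m
  induction m using Nat.strong_induction_on with
  | _ m ih =>
    intro i v hv
    match m with
    | 0 => simp [FS, cnt]
    | 1 =>
      rw [FS, cnt]
      exact card_biUnion_FS n 0 i v hv (fun w hw => ih 0 (by omega) (i+1) w (by omega))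
    | m+2 =>
      rw [FS, cnt]
      rw [Finset.card_union_of_disjoint]
      · rw [card_biUnion_FS n (m+1) i v hv
          (fun w hw => ih (m+1) (by omega) (i+1) w (by omega))]
        congr 1
        rw [Finset.card_image_of_injective, ih m (by omega) (i+2) (i+2) (by omega)]
        · congr 1
          omega
        · intro a b hab
          simpa using hab
      · rw [Finset.disjoint_left]
        intro l hl hl'
        simp only [Finset.mem_biUnion, Finset.mem_image] at hl
        obtain ⟨w, hw, t, _, rfl⟩ := hl
        rw [Finset.mem_Icc] at hw
        simp only [Finset.mem_image] at hl'
        obtain ⟨t', _, he⟩ := hl'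
        injection he with h1 _
        omega

lemma chain_le_mem {v : ℕ} {l : List ℕ} (h : List.Chain (· ≤ ·) v l) : ∀ x ∈ l, v ≤ x := by
  rw [List.Chain, List.isChain_iff_pairwise] at h
  intro x hx
  exact List.rel_of_pairwise_cons h hx

lemma insert_Icc (i : ℕ) : insert (i+1) (Finset.Icc 1 i) = Finset.Icc 1 (i+1) := by
  ext a
  simp only [Finset.mem_insert, Finset.mem_Icc]
  omega

lemma insert_insert_Icc (i : ℕ) :
    insert (i+1) (insert (i+2) (Finset.Icc 1 i)) = Finset.Icc 1 (i+2) := by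
  ext a
  simp only [Finset.mem_insert, Finset.mem_Icc]
  omega

lemma not_mem_Icc_of_gt {w i : ℕ} (h : i < w) : w ∉ Finset.Icc 1 i := by
  simp only [Finset.mem_Icc]
  omega

lemma mem_FS_left {n m i v w : ℕ} {t : List ℕ} (hw : w ∈ Finset.Icc v (i+1))
    (ht : t ∈ FS n m (i+1) w) : w :: t ∈ FS n (m+1) i v := by
  match m with
  | 0 =>
    rw [FS]
    exact Finset.mem_biUnion.2 ⟨w, hw, Finset.mem_image_of_mem _ ht⟩
  | m+1 =>
    rw [FS]
    exact Finset.mem_union_left _ (Finset.mem_biUnion.2 ⟨w, hw, Finset.mem_image_of_mem _ ht⟩)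

lemma mem_FS_right {n m i v : ℕ} {t : List ℕ} (ht : t ∈ FS n m (i+2) (i+2)) :
    (i+2) :: (i+2) :: t ∈ FS n (m+2) i v := by
  rw [FS]
  exact Finset.mem_union_right _ (Finset.mem_image_of_mem _ ht)

lemma mem_FS_cases {n m i v : ℕ} {l : List ℕ} (h : l ∈ FS n (m+1) i v) :
    (∃ w t, l = w :: t ∧ v ≤ w ∧ w ≤ i+1 ∧ t ∈ FS n m (i+1) w) ∨
    (∃ m' t, m = m'+1 ∧ l = (i+2)::(i+2)::t ∧ t ∈ FS n m' (i+2) (i+2)) := by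
  match m with
  | 0 =>
    rw [FS] at h
    rcases Finset.mem_biUnion.1 h with ⟨w, hw, him⟩
    rcases Finset.mem_image.1 him with ⟨t, ht, rfl⟩
    rw [Finset.mem_Icc] at hw
    exact Or.inl ⟨w, t, rfl, hw.1, hw.2, ht⟩
  | m+1 =>
    rw [FS] at h
    rcases Finset.mem_union.1 h with h1 | h2
    · rcases Finset.mem_biUnion.1 h1 with ⟨w, hw, him⟩
      rcases Finset.mem_image.1 him with ⟨t, ht, rfl⟩
      rw [Finset.mem_Icc] at hw
      exact Or.inl ⟨w, t, rfl, hw.1, hw.2, ht⟩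
    · rcases Finset.mem_image.1 h2 with ⟨t, ht, rfl⟩
      exact Or.inr ⟨m, t, rfl, rfl, ht⟩

lemma naplesStep_le_succ {n i w : ℕ} (hw1 : 1 ≤ w) (hw2 : w ≤ i + 1) (hin : i < n) :
    naplesStep 1 n (Finset.Icc 1 i) w = some (i+1) := by
  by_cases hwi : w = i + 1
  · subst hwi
    exact naplesStep_free (not_mem_Icc_of_gt (by omega))
  · exact naplesStep_clean hw1 (by omega) hin

lemma FS_iff (n : ℕ) : ∀ (m i v : ℕ), i + m = n → 1 ≤ v → v ≤ i + 1 → ∀ l : List ℕ,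
    (l ∈ FS n m i v ↔
      (List.Chain (· ≤ ·) v l ∧ (∀ x ∈ l, x ≤ n) ∧ l.length = m ∧
        (naplesSpots 1 n (Finset.Icc 1 i) l).isSome)) := by
  intro m
  induction m using Nat.strong_induction_on with
  | _ m ih =>
    intro i v hi hv1 hv2 l
    match m with
    | 0 =>
      constructor
      · intro hl
        have hl' : l = [] := by simpa [FS] using hl
        subst hl'
        exact ⟨List.Chain.nil, by simp, rfl, by rw [naplesSpots]; rfl⟩
      · rintro ⟨_, _, hlen, _⟩
        have : l = [] := List.length_eq_zero_iff.1 hlen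
        subst this
        simp [FS]
    | m+1 =>
      have hin : i < n := by omega
      constructor
      · intro hl
        rcases mem_FS_cases hl with ⟨w, t, rfl, hvw, hwi, ht⟩ | ⟨m', t, rfl, rfl, ht⟩
        · obtain ⟨hch, hle, hlen, hpark⟩ :=
            (ih m (Nat.lt_succ_self m) (i+1) w (by omega) (le_trans hv1 hvw) (by omega) t).1 ht
          refine ⟨List.Chain.cons hvw hch, ?_, by simp [hlen], ?_⟩
          · intro x hx
            rcases List.mem_cons.1 hx with rfl | hx'
            · omega
            · exact hle x hx'
          · rw [naplesSpots, naplesStep_le_succ (le_trans hv1 hvw) hwi hin]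
            change (Option.map _ (naplesSpots 1 n (insert (i+1) (Finset.Icc 1 i)) t)).isSome
            rw [insert_Icc, Option.isSome_map]
            exact hpark
        · have hi2 : i + 2 ≤ n := by omega
          obtain ⟨hch, hle, hlen, hpark⟩ :=
            (ih m' (by omega) (i+2) (i+2) (by omega) (by omega) (by omega) t).1 ht
          refine ⟨List.Chain.cons (by omega) (List.Chain.cons le_rfl hch), ?_, by simp [hlen], ?_⟩
          · intro x hx
            rcases List.mem_cons.1 hx with rfl | hx'
            · omega
            · rcases List.mem_cons.1 hx' with rfl | hx''
              · omega
              · exact hle x hx''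
          · rw [naplesSpots, naplesStep_free (not_mem_Icc_of_gt (by omega))]
            change (Option.map _
              (naplesSpots 1 n (insert (i+2) (Finset.Icc 1 i)) ((i+2) :: t))).isSome
            rw [Option.isSome_map]
            rw [naplesSpots, naplesStep_gapped]
            change (Option.map _
              (naplesSpots 1 n (insert (i+1) (insert (i+2) (Finset.Icc 1 i))) t)).isSome
            rw [insert_insert_Icc, Option.isSome_map]
            exact hpark
      · rintro ⟨hch, hle, hlen, hpark⟩
        match l with
        | [] => simp at hlen
        | w :: t =>
          rw [List.Chain, List.chain_cons] at hch
          obtain ⟨hvw, hch⟩ := hch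
          have hwn : w ≤ n := hle w (List.mem_cons_self)
          have hw1 : 1 ≤ w := le_trans hv1 hvw
          have hlent : t.length = m := by simpa using hlen
          rw [naplesSpots] at hpark
          by_cases hcase : w ≤ i + 1
          · rw [naplesStep_le_succ hw1 hcase hin] at hpark
            change (Option.map _
              (naplesSpots 1 n (insert (i+1) (Finset.Icc 1 i)) t)).isSome at hpark
            rw [insert_Icc, Option.isSome_map] at hpark
            have ht : t ∈ FS n m (i+1) w :=
              (ih m (Nat.lt_succ_self m) (i+1) w (by omega) hw1 (by omega) t).2
                ⟨hch, fun x hx => hle x (List.mem_cons_of_mem _ hx), hlent, hpark⟩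
            exact mem_FS_left (Finset.mem_Icc.2 ⟨hvw, hcase⟩) ht
          · have hwge : i + 2 ≤ w := by omega
            rw [naplesStep_free (not_mem_Icc_of_gt (by omega))] at hpark
            change (Option.map _
              (naplesSpots 1 n (insert w (Finset.Icc 1 i)) t)).isSome at hpark
            rw [Option.isSome_map] at hpark
            have hcardocc : (insert w (Finset.Icc 1 i)).card = i + 1 := by
              rw [Finset.card_insert_of_notMem (not_mem_Icc_of_gt (by omega)), Nat.card_Icc]
              omega
            by_cases hw2 : w = i + 2
            · subst hw2
              match t, hlent with
              | [], hlent => simp only [List.length_nil] at hlent; omega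
              | w' :: t', hlent =>
                rw [List.chain_cons] at hch
                obtain ⟨hww', hch'⟩ := hch
                by_cases hw'2 : w' = i + 2
                · subst hw'2
                  rw [naplesSpots, naplesStep_gapped] at hpark
                  change (Option.map _ (naplesSpots 1 n
                    (insert (i+1) (insert (i+2) (Finset.Icc 1 i))) t')).isSome at hpark
                  rw [insert_insert_Icc, Option.isSome_map] at hpark
                  obtain ⟨mm, rfl⟩ : ∃ mm, m = mm + 1 := ⟨m - 1, by omega⟩
                  have ht' : t' ∈ FS n mm (i+2) (i+2) :=
                    (ih mm (by omega) (i+2) (i+2) (by omega) (by omega) (by omega) t').2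
                      ⟨hch', fun x hx => hle x (by simp [hx]),
                        by simpa using hlent, hpark⟩
                  exact mem_FS_right ht'
                · exfalso
                  refine fail_of_gap (i+1) (w' :: t') (insert (i+2) (Finset.Icc 1 i)) ?_
                    (by omega) (by omega) ?_ ?_ ?_ hpark
                  · intro a ha
                    rcases Finset.mem_insert.1 ha with rfl | ha'
                    · exact Finset.mem_Icc.2 ⟨by omega, by omega⟩
                    · rw [Finset.mem_Icc] at ha' ⊢
                      omega
                  · simp only [Finset.mem_insert, Finset.mem_Icc]
                    omega
                  · intro p hp
                    have hw'p : w' ≤ p ∨ p = w' := by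
                      rcases List.mem_cons.1 hp with rfl | hp'
                      · exact Or.inr rfl
                      · exact Or.inl (chain_le_mem hch' p hp')
                    have hpn : p ≤ n := hle p (by simp [List.mem_cons.1 hp])
                    constructor
                    · rcases hw'p with h | h <;> omega
                    · exact hpn
                  · have h1 : t'.length + 1 = m := by simpa using hlent
                    rw [hcardocc, List.length_cons]
                    omega
            · exfalso
              refine fail_of_gap (i+1) t (insert w (Finset.Icc 1 i)) ?_
                (by omega) (by omega) ?_ ?_ ?_ hpark
              · intro a ha
                rcases Finset.mem_insert.1 ha with rfl | ha'
                · exact Finset.mem_Icc.2 ⟨by omega, by omega⟩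
                · rw [Finset.mem_Icc] at ha' ⊢
                  omega
              · simp only [Finset.mem_insert, Finset.mem_Icc]
                omega
              · intro p hp
                have := chain_le_mem hch p hp
                have hpn : p ≤ n := hle p (List.mem_cons_of_mem _ hp)
                omega
              · rw [hcardocc]
                omega

lemma numAsc_eq_cnt (n : ℕ) : numAsc n 1 = cnt n 0 := by
  have hset : {f : List ℕ | IsNaplesPF 1 n f ∧ List.Pairwise (· ≤ ·) f} = ↑(FS n n 0 1) := by
    ext l
    simp only [Set.mem_setOf_eq, Finset.coe_sort_coe, Finset.mem_coe]
    rw [FS_iff n n 0 1 (by omega) le_rfl (by omega) l]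
    have hIcc : Finset.Icc 1 0 = (∅ : Finset ℕ) := by
      apply Finset.Icc_eq_empty
      omega
    rw [hIcc]
    constructor
    · rintro ⟨⟨⟨hlen, hmem⟩, hpark⟩, hsort⟩
      refine ⟨?_, fun x hx => (hmem x hx).2, hlen, hpark⟩
      rw [List.Chain, List.isChain_iff_pairwise, List.pairwise_cons]
      exact ⟨fun x hx => (hmem x hx).1, hsort⟩
    · rintro ⟨hch, hle, hlen, hpark⟩
      rw [List.Chain, List.isChain_iff_pairwise, List.pairwise_cons] at hch
      exact ⟨⟨⟨hlen, fun p hp => ⟨hch.1 p hp, hle p hp⟩⟩, hpark⟩, hch.2⟩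
  rw [numAsc, hset, Set.ncard_coe_finset, card_FS n n 0 1 (by omega)]



open PowerSeries Finset

noncomputable def CC : PowerSeries ℤ := PowerSeries.mk fun m => (catalan m : ℤ)

lemma CC_eq : CC = 1 + X * CC ^ 2 := by
  ext n
  rcases n with _ | n
  · simp [CC, coeff_mk, catalan_zero]
  · rw [map_add, coeff_succ_X_mul, coeff_one, if_neg (Nat.succ_ne_zero n)]
    rw [pow_two, coeff_mul]
    simp only [CC, coeff_mk]
    rw [catalan_succ']
    push_cast
    simp

lemma constantCoeff_CC : constantCoeff CC = 1 := by
  simp [CC, ← coeff_zero_eq_constantCoeff, coeff_mk]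

/-- The common recurrence satisfied by the transfer-matrix generating functions. -/
def famRec (Y : ℕ → PowerSeries ℤ) : Prop :=
  ∀ d, Y d = 1 + X * (∑ j ∈ range (d+1), Y (j+1)) + X^2 * Y 1

lemma coeff_aux (S T : PowerSeries ℤ) (m : ℕ) :
    (coeff m) (1 + X * S + X^2 * T) =
      (if m = 0 then 1 else 0) +
        (match m with | 0 => 0 | m'+1 => coeff m' S) +
        (match m with | 0 => 0 | 1 => 0 | m'+2 => coeff m' T) := by
  have hT : X^2 * T = X * (X * T) := by ring
  rw [map_add, map_add, coeff_one, hT]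
  rcases m with _ | _ | m
  · simp
  · rw [coeff_succ_X_mul, coeff_succ_X_mul, coeff_zero_X_mul]
  · rw [coeff_succ_X_mul, coeff_succ_X_mul, coeff_succ_X_mul]

lemma famRec_unique {Y Z : ℕ → PowerSeries ℤ} (hY : famRec Y) (hZ : famRec Z) :
    ∀ d, Y d = Z d := by
  have key : ∀ m d, coeff m (Y d) = coeff m (Z d) := by
    intro m
    induction m using Nat.strong_induction_on with
    | _ m ih =>
      intro d
      rw [hY d, hZ d, coeff_aux, coeff_aux]
      rcases m with _ | _ | m
      · rfl
      · simp only [map_sum]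
        rw [Finset.sum_congr rfl fun j _ => ih 0 (by omega) (j+1)]
      · simp only [map_sum]
        rw [Finset.sum_congr rfl fun j _ => ih (m+1) (by omega) (j+1), ih m (by omega) 1]
  intro d
  ext m
  exact key m d

lemma tel (d : ℕ) : ∑ j ∈ range (d+1), X * CC ^ (j+1) = X * CC + CC ^ d - 1 := by
  induction d with
  | zero => simp
  | succ d ih =>
    rw [Finset.sum_range_succ, ih]
    have : X * CC ^ (d+2) = CC ^ (d+1) - CC ^ d := by
      linear_combination (-(CC ^ d)) * CC_eq
    rw [this]
    ring

lemma hGG1 (F : ℕ → ℤ) (hF : PowerSeries.mk F * (1 - X ^ 2 * CC ^ 2) = 1) :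
    (CC * PowerSeries.mk F) * (1 - (X + X^2) * CC) = 1 := by
  have h2 : CC * (1 - (X + X^2) * CC) = 1 - X^2 * CC^2 := by
    linear_combination CC_eq
  have h3 : ((CC * PowerSeries.mk F) * (1 - (X + X^2) * CC) - 1) * CC = 0 := by
    have : (CC * PowerSeries.mk F) * (1 - (X + X^2) * CC) * CC
        = (PowerSeries.mk F * (1 - X^2 * CC^2)) * CC := by
      linear_combination (CC * PowerSeries.mk F) * h2
    rw [sub_mul, this, hF]
    ring
  have hCC : CC ≠ 0 := by
    intro h
    have := constantCoeff_CC
    rw [h] at this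
    simp at this
  rcases mul_eq_zero.1 h3 with h | h
  · exact sub_eq_zero.1 h
  · exact absurd h hCC

lemma famRec_Z (F : ℕ → ℤ) (hF : PowerSeries.mk F * (1 - X ^ 2 * CC ^ 2) = 1) :
    famRec (fun d => CC ^ d * (CC * PowerSeries.mk F)) := by
  intro d
  set GG := CC * PowerSeries.mk F with hGGdef
  simp only
  have h3 : X * ∑ j ∈ range (d+1), CC ^ (j+1) = X * CC + CC ^ d - 1 := by
    rw [Finset.mul_sum]
    exact tel d
  have h4 : ∑ j ∈ range (d+1), CC ^ (j+1) * GG = (∑ j ∈ range (d+1), CC ^ (j+1)) * GG :=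
    (Finset.sum_mul _ _ _).symm
  rw [h4]
  have h5 := hGG1 F hF
  rw [← hGGdef] at h5
  linear_combination (-GG) * h3 + h5

noncomputable def HD (d : ℕ) : PowerSeries ℤ := PowerSeries.mk fun m => (cnt m d : ℤ)

lemma famRec_HD : famRec HD := by
  intro d
  ext m
  rw [coeff_aux, HD, coeff_mk]
  rcases m with _ | _ | m
  · simp [cnt]
  · rw [cnt]
    simp only [map_sum, HD, coeff_mk]
    push_cast
    simp
  · rw [cnt]
    simp only [map_sum, HD, coeff_mk]
    push_cast
    simp


/-- For all `n ≥ 0`, the number `I_{n,1}` of ascending `1`-Naples parking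
functions of length `n` equals `Σ_{i=0}^n C_i · F_{n-i}`, the `n`-th term of the convolution
of the Catalan numbers with the Fine numbers, where the Fine numbers are defined by the
generating function identity `F(x)·(1 − x²C(x)²) = 1`. -/
theorem statement12 (F : ℕ → ℤ)
    (hF : PowerSeries.mk F *
        (1 - PowerSeries.X ^ 2 * (PowerSeries.mk fun m => (catalan m : ℤ)) ^ 2) = 1)
    (n : ℕ) :
    (numAsc n 1 : ℤ) = ∑ i ∈ Finset.range (n + 1), (catalan i : ℤ) * F (n - i) := by
  rw [numAsc_eq_cnt]
  have hF' : PowerSeries.mk F * (1 - X ^ 2 * CC ^ 2) = 1 := hF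
  have h1 := famRec_unique famRec_HD (famRec_Z F hF') 0
  have h2 : (cnt n 0 : ℤ) = coeff n (CC * PowerSeries.mk F) := by
    calc (cnt n 0 : ℤ) = coeff n (HD 0) := by rw [HD, coeff_mk]
    _ = coeff n (CC ^ 0 * (CC * PowerSeries.mk F)) := by rw [h1]
    _ = coeff n (CC * PowerSeries.mk F) := by rw [pow_zero, one_mul]
  rw [h2, coeff_mul]
  rw [Finset.Nat.sum_antidiagonal_eq_sum_range_succ_mk]
  apply Finset.sum_congr rfl
  intro k hk
  rw [CC, coeff_mk, coeff_mk]
end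

section
/- Let G(x) = Σ_{n≥0} binom(2n+1, n) x^n and let C(x) = Σ_{n≥0} C_n x^n be the generating function of the Catalan numbers. Then for every integer k ≥ 0, G(x)·(C(x)−1)^k = Σ_{n≥0} binom(2n+1, n+k+1) x^n as formal power series; that is, for all n ≥ 0 the n-th coefficient of G(x)·(C(x)−1)^k equals binom(2n+1, n+k+1). -/
noncomputable def Cser : PowerSeries ℤ := PowerSeries.mk fun n => (catalan n : ℤ)

noncomputable def Tser (j : ℕ) : PowerSeries ℤ :=
  PowerSeries.mk fun n => ((2 * n + j).choose n : ℤ)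

lemma Cser_eq : Cser = 1 + PowerSeries.X * Cser ^ 2 := by
  ext n
  cases n with
  | zero => simp [Cser]
  | succ n =>
    rw [map_add, PowerSeries.coeff_succ_X_mul, pow_two, PowerSeries.coeff_mul]
    simp only [Cser, PowerSeries.coeff_mk, PowerSeries.coeff_one, Nat.succ_ne_zero, if_false,
      zero_add, catalan_succ']
    push_cast
    rfl

lemma coeff_Cser_mul_Tser : ∀ n j, PowerSeries.coeff (R := ℤ) n (Cser * Tser j) =
    ((2 * n + j + 1).choose n : ℤ) := by
  intro n
  induction n using Nat.strong_induction_on with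
  | _ n ih =>
    intro j
    match n with
    | 0 =>
      simp [PowerSeries.coeff_mul, Cser, Tser]
    | n + 1 =>
      have h1 : Cser * Tser j = Tser j + PowerSeries.X * (Cser * (Cser * Tser j)) := by
        conv_lhs => rw [Cser_eq]
        ring
      rw [h1, map_add, PowerSeries.coeff_succ_X_mul]
      have h2 : PowerSeries.coeff (R := ℤ) n (Cser * (Cser * Tser j)) =
          PowerSeries.coeff (R := ℤ) n (Cser * Tser (j + 1)) := by
        rw [PowerSeries.coeff_mul, PowerSeries.coeff_mul]
        refine Finset.sum_congr rfl fun p hp => ?_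
        rw [Finset.HasAntidiagonal.mem_antidiagonal] at hp
        rw [ih p.2 (by omega) j]
        simp only [Tser, PowerSeries.coeff_mk]
        rw [show 2 * p.2 + (j + 1) = 2 * p.2 + j + 1 from (Nat.add_assoc _ _ _).symm]
      rw [h2, ih n (by omega) (j + 1)]
      have hT : PowerSeries.coeff (R := ℤ) (n + 1) (Tser j) =
          (((2 * n + j + 2)).choose (n + 1) : ℤ) := by
        simp only [Tser, PowerSeries.coeff_mk]
        rw [show 2 * (n + 1) + j = 2 * n + j + 2 from by omega]
      rw [hT]
      rw [show 2 * n + (j + 1) + 1 = 2 * n + j + 2 from by omega]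
      rw [show 2 * (n + 1) + j + 1 = (2 * n + j + 2) + 1 from by omega]
      rw [Nat.choose_succ_succ' (2 * n + j + 2) n]
      push_cast
      ring

lemma Cser_mul_Tser (j : ℕ) : Cser * Tser j = Tser (j + 1) := by
  ext n
  rw [coeff_Cser_mul_Tser]
  simp only [Tser, PowerSeries.coeff_mk]
  rw [show 2 * n + (j + 1) = 2 * n + j + 1 from (Nat.add_assoc _ _ _).symm]

lemma Cser_pow_mul_Tser : ∀ m j, Cser ^ m * Tser j = Tser (j + m)
  | 0, j => by simp
  | m + 1, j => by
    have h : Cser ^ (m + 1) * Tser j = Cser ^ m * (Cser * Tser j) := by ring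
    rw [h, Cser_mul_Tser, Cser_pow_mul_Tser m (j + 1),
      show j + 1 + m = j + (m + 1) from by omega]

/-- Let `G(x) = Σ_{n≥0} binom(2n+1, n) xⁿ` and let `C(x)` be the
generating function of the Catalan numbers.  For every `k ≥ 0` and `n ≥ 0`, the `n`-th
coefficient of `G(x)·(C(x) − 1)^k` equals `binom(2n+1, n+k+1)`. -/
theorem statement14 (k n : ℕ) :
    PowerSeries.coeff (R := ℤ) n
        ((PowerSeries.mk fun m => ((2 * m + 1).choose m : ℤ)) *
          ((PowerSeries.mk fun m => (catalan m : ℤ)) - 1) ^ k) =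
      ((2 * n + 1).choose (n + k + 1) : ℤ) := by
  have hG : (PowerSeries.mk fun m => ((2 * m + 1).choose m : ℤ)) = Tser 1 := rfl
  have hC : (PowerSeries.mk fun m => (catalan m : ℤ)) = Cser := rfl
  have hsub : Cser - 1 = PowerSeries.X * Cser ^ 2 := by
    conv_lhs => rw [Cser_eq]
    ring
  rw [hG, hC, hsub, mul_pow, ← pow_mul]
  have h : Tser 1 * (PowerSeries.X ^ k * Cser ^ (2 * k)) =
      Tser (1 + 2 * k) * PowerSeries.X ^ k := by
    rw [← Cser_pow_mul_Tser (2 * k) 1]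
    ring
  rw [h, PowerSeries.coeff_mul_X_pow']
  by_cases hk : k ≤ n
  · rw [if_pos hk]
    simp only [Tser, PowerSeries.coeff_mk]
    rw [show 2 * (n - k) + (1 + 2 * k) = 2 * n + 1 from by omega]
    rw [show n - k = (2 * n + 1) - (n + k + 1) from by omega,
      Nat.choose_symm (by omega)]
  · rw [if_neg hk, Nat.choose_eq_zero_of_lt (by omega)]
    simp
end

section
/- For all integers k ≥ 0 and n ≥ 1, the total number of descending k-Naples parking functions of length n equals binom(2n−1, n) − binom(2n−1, n+k+1). -/
namespace NaplesAux

lemma mem_back {k p s : ℕ} (h : s ∈ backCandidates k p) :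
    1 ≤ s ∧ s < p ∧ p ≤ s + k := by
  simp only [backCandidates, List.mem_filter, List.mem_map, List.mem_range,
    decide_eq_true_eq] at h
  obtain ⟨⟨i, hi, rfl⟩, h1⟩ := h
  omega

lemma back_mem {k p t : ℕ} (h1 : 1 ≤ t) (h2 : t < p) (h3 : p ≤ t + k) :
    t ∈ backCandidates k p := by
  simp only [backCandidates, List.mem_filter, List.mem_map, List.mem_range,
    decide_eq_true_eq]
  exact ⟨⟨p - t - 1, by omega, by omega⟩, h1⟩

lemma mem_fwd {n p s : ℕ} (h : s ∈ fwdCandidates n p) : p < s ∧ s ≤ n := by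
  simp only [fwdCandidates, List.mem_range'_1] at h
  omega

lemma fwd_mem {n p t : ℕ} (h1 : p < t) (h2 : t ≤ n) : t ∈ fwdCandidates n p := by
  simp only [fwdCandidates, List.mem_range'_1]
  omega

lemma step_some {k n p s : ℕ} {occ : Finset ℕ} (hp1 : 1 ≤ p) (hpn : p ≤ n)
    (h : naplesStep k n occ p = some s) : s ∉ occ ∧ p ≤ s + k ∧ 1 ≤ s ∧ s ≤ n := by
  unfold naplesStep at h
  split at h
  · rename_i hpo
    split at h
    · rename_i s' l heq
      have hs : s' ∈ (backCandidates k p).filter (fun x => decide (x ∉ occ)) := by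
        rw [heq]; exact List.mem_cons_self
      obtain rfl : s' = s := Option.some.inj h
      rw [List.mem_filter, decide_eq_true_eq] at hs
      have := mem_back hs.1
      exact ⟨hs.2, by omega, by omega, by omega⟩
    · rename_i hback
      split at h
      · rename_i s' l heq
        have hs : s' ∈ (fwdCandidates n p).filter (fun x => decide (x ∉ occ)) := by
          rw [heq]; exact List.mem_cons_self
        obtain rfl : s' = s := Option.some.inj h
        rw [List.mem_filter, decide_eq_true_eq] at hs
        have := mem_fwd hs.1
        exact ⟨hs.2, by omega, by omega, by omega⟩
      · exact absurd h (by simp)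
  · rename_i hpo
    obtain rfl : p = s := Option.some.inj h
    exact ⟨hpo, by omega, hp1, hpn⟩

lemma step_none {k n p : ℕ} {occ : Finset ℕ} (h : naplesStep k n occ p = none) :
    ∀ t, 1 ≤ t → t ≤ n → p - k ≤ t → t ∈ occ := by
  intro t ht1 htn htk
  unfold naplesStep at h
  split at h
  · rename_i hpo
    split at h
    · simp at h
    · rename_i hback
      split at h
      · simp at h
      · rename_i hfwd
        rcases lt_trichotomy t p with hlt | rfl | hgt
        · have hmem : t ∈ backCandidates k p := back_mem ht1 hlt (by omega)
          by_contra hto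
          have : t ∈ (backCandidates k p).filter (fun s => decide (s ∉ occ)) := by
            rw [List.mem_filter, decide_eq_true_eq]; exact ⟨hmem, hto⟩
          rw [hback] at this; simp at this
        · exact hpo
        · have hmem : t ∈ fwdCandidates n p := fwd_mem hgt htn
          by_contra hto
          have : t ∈ (fwdCandidates n p).filter (fun s => decide (s ∉ occ)) := by
            rw [List.mem_filter, decide_eq_true_eq]; exact ⟨hmem, hto⟩
          rw [hfwd] at this; simp at this
  · simp at h

lemma parks_of_bounds {k n : ℕ} : ∀ (prefs : List ℕ) (occ : Finset ℕ),
    occ.card + prefs.length ≤ n →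
    (∀ j (hj : j < prefs.length), 1 ≤ prefs.get ⟨j, hj⟩ ∧ prefs.get ⟨j, hj⟩ ≤ n ∧
      prefs.get ⟨j, hj⟩ + (occ.card + j) ≤ n + k) →
    (naplesSpots k n occ prefs).isSome := by
  intro prefs
  induction prefs with
  | nil => intro occ _ _; simp [naplesSpots]
  | cons p rest ih =>
    intro occ hlen hb
    have hp := hb 0 (by simp)
    simp only [List.get] at hp
    unfold naplesSpots
    cases hstep : naplesStep k n occ p with
    | none =>
      exfalso
      have hall := step_none hstep
      have hsub : Finset.Icc (max 1 (p - k)) n ⊆ occ := by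
        intro t ht
        rw [Finset.mem_Icc] at ht
        exact hall t (by omega) ht.2 (by omega)
      have hcard := Finset.card_le_card hsub
      rw [Nat.card_Icc] at hcard
      simp only [List.length_cons] at hlen
      omega
    | some s =>
      have hs := step_some hp.1 hp.2.1 hstep
      have hrec : (naplesSpots k n (insert s occ) rest).isSome := by
        apply ih
        · rw [Finset.card_insert_of_notMem hs.1]
          simp only [List.length_cons] at hlen
          omega
        · intro j hj
          have h2 := hb (j + 1) (by simpa using Nat.succ_lt_succ hj)
          rw [Finset.card_insert_of_notMem hs.1]
          simp only [List.get] at h2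
          refine ⟨h2.1, h2.2.1, by omega⟩
      simp only [Option.isSome_map]
      exact hrec

lemma spots_spec {k n : ℕ} : ∀ (prefs : List ℕ) (occ : Finset ℕ) (l : List ℕ),
    naplesSpots k n occ prefs = some l →
    (∀ p ∈ prefs, 1 ≤ p ∧ p ≤ n) →
    l.length = prefs.length ∧ l.Nodup ∧ (∀ s ∈ l, s ∉ occ) ∧
      ∀ j (hj : j < l.length) (hj' : j < prefs.length),
        prefs.get ⟨j, hj'⟩ ≤ l.get ⟨j, hj⟩ + k ∧ 1 ≤ l.get ⟨j, hj⟩ ∧ l.get ⟨j, hj⟩ ≤ n := by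
  intro prefs
  induction prefs with
  | nil =>
    intro occ l h _
    simp only [naplesSpots, Option.some.injEq] at h
    subst h
    simp
  | cons p rest ih =>
    intro occ l h hmem
    have hp : 1 ≤ p ∧ p ≤ n := hmem p (List.mem_cons_self)
    unfold naplesSpots at h
    cases hstep : naplesStep k n occ p with
    | none => rw [hstep] at h; simp at h
    | some s =>
      rw [hstep] at h
      rw [Option.map_eq_some_iff] at h
      obtain ⟨l', hl', rfl⟩ := h
      have hs := step_some hp.1 hp.2 hstep
      obtain ⟨hlen, hnd, hnocc, hidx⟩ := ih (insert s occ) l' hl'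
        (fun q hq => hmem q (List.mem_cons_of_mem _ hq))
      refine ⟨by simp [hlen], ?_, ?_, ?_⟩
      · rw [List.nodup_cons]
        exact ⟨fun hsl => (hnocc s hsl) (Finset.mem_insert_self _ _), hnd⟩
      · intro t ht
        rcases List.mem_cons.mp ht with rfl | ht'
        · exact hs.1
        · exact fun hto => (hnocc t ht') (Finset.mem_insert_of_mem hto)
      · intro j hj hj'
        cases j with
        | zero => exact ⟨hs.2.1, hs.2.2.1, hs.2.2.2⟩
        | succ m =>
          simp only [List.length_cons, Nat.succ_lt_succ_iff] at hj hj'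
          exact hidx m hj hj'

lemma bounds_of_parks {k n : ℕ} {f : List ℕ} (hlen : f.length = n)
    (hmem : ∀ p ∈ f, 1 ≤ p ∧ p ≤ n)
    (hsort : List.Pairwise (fun a b => b ≤ a) f)
    (hpark : (naplesSpots k n ∅ f).isSome) :
    ∀ i (hi : i < f.length), f.get ⟨i, hi⟩ + i ≤ n + k := by
  obtain ⟨l, hl⟩ := Option.isSome_iff_exists.mp hpark
  obtain ⟨hllen, hnd, _, hidx⟩ := spots_spec f ∅ l hl hmem
  intro i hi
  set fi := f.get ⟨i, hi⟩ with hfi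
  have hfib : 1 ≤ fi ∧ fi ≤ n := hmem fi (List.get_mem _ _)
  -- the first i+1 spots are distinct and lie in [max 1 (fi - k), n]
  have htake : (l.take (i + 1)).toFinset ⊆ Finset.Icc (max 1 (fi - k)) n := by
    intro t ht
    rw [List.mem_toFinset] at ht
    obtain ⟨m, hm, hmt⟩ := List.getElem_of_mem ht
    rw [List.length_take] at hm
    have hmi : m < i + 1 := lt_of_lt_of_le hm (min_le_left _ _)
    have hml : m < l.length := by omega
    have hmf : m < f.length := by omega
    rw [List.getElem_take] at hmt
    have hrel : fi ≤ f.get ⟨m, hmf⟩ := by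
      rcases Nat.lt_or_ge m i with hlt | hge
      · exact hsort.rel_get_of_lt (by simpa using hlt)
      · have : m = i := by omega
        subst this; rfl
    have hspec := hidx m hml hmf
    rw [Finset.mem_Icc]
    have h1 : 1 ≤ t := by
      have := hmem (f.get ⟨m, hmf⟩) (List.get_mem _ _)
      have hget : l.get ⟨m, hml⟩ = t := hmt
      omega
    have hget : l.get ⟨m, hml⟩ = t := hmt
    constructor
    · omega
    · omega
  have hndt : (l.take (i + 1)).Nodup := hnd.sublist (List.take_sublist _ _)
  have hcard : (l.take (i + 1)).toFinset.card = i + 1 := by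
    rw [List.toFinset_card_of_nodup hndt, List.length_take]
    omega
  have := Finset.card_le_card htake
  rw [hcard, Nat.card_Icc] at this
  omega

lemma hs_choose (m c : ℕ) : ∀ B : ℕ,
    (∑ i ∈ Finset.range B, (m + i).choose c) + m.choose (c + 1) = (B + m).choose (c + 1) := by
  intro B
  induction B with
  | zero => simp
  | succ B ihB =>
    rw [Finset.sum_range_succ, add_right_comm, ihB]
    have h1 : B + 1 + m = (B + m) + 1 := by omega
    rw [h1, Nat.choose_succ_succ' (B + m) c, Nat.add_comm m B]
    omega

def DL : ℕ → ℕ → ℕ → Finset (List ℕ)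
  | 0, _, _ => {[]}
  | m + 1, B, c =>
    (Finset.Icc 1 B).biUnion fun v => (DL m (min v (c - 1)) (c - 1)).image (fun l => v :: l)

lemma card_DL : ∀ (m c B : ℕ), m ≤ c → B ≤ c →
    (DL m B c).card + (B + m - 1).choose (c + 1) = (B + m - 1).choose m := by
  intro m
  induction m with
  | zero =>
    intro c B _ hBc
    have h0 : (B - 1).choose (c + 1) = 0 := Nat.choose_eq_zero_of_lt (by omega)
    simp [DL, h0]
  | succ m ih =>
    intro c B hmc hBc
    have hc1 : 1 ≤ c := by omega
    have hcard : (DL (m + 1) B c).card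
        = ∑ v ∈ Finset.Icc 1 B, (DL m (min v (c - 1)) (c - 1)).card := by
      rw [DL]
      rw [Finset.card_biUnion]
      · refine Finset.sum_congr rfl fun v _ => ?_
        apply Finset.card_image_of_injective
        intro l1 l2 hl
        simpa using hl
      · intro v _ w _ hvw
        simp only [Finset.disjoint_left]
        intro a ha hb
        simp only [Finset.mem_image] at ha hb
        obtain ⟨l1, _, rfl⟩ := ha
        obtain ⟨l2, _, h2⟩ := hb
        simp only [List.cons.injEq] at h2
        exact hvw h2.1.symm
    -- per-term identity
    have hterm : ∀ v ∈ Finset.Icc 1 B,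
        (DL m (min v (c - 1)) (c - 1)).card + (v + m - 1).choose c = (v + m - 1).choose m := by
      intro v hv
      rw [Finset.mem_Icc] at hv
      rcases Nat.lt_or_ge v c with hvc | hvc
      · have hmin : min v (c - 1) = v := by omega
        rw [hmin]
        have := ih (c - 1) v (by omega) (by omega)
        rwa [Nat.sub_add_cancel hc1] at this
      · obtain rfl : c = v := by omega
        have hmin : min c (c - 1) = c - 1 := by omega
        rw [hmin]
        have h1 := ih (c - 1) (c - 1) (by omega) le_rfl
        rw [Nat.sub_add_cancel (by omega : 1 ≤ c)] at h1
        rcases Nat.eq_zero_or_pos m with rfl | hm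
        · have hz : (c - 1).choose c = 0 := Nat.choose_eq_zero_of_lt (by omega)
          simp [DL, hz]
        · have he1 : c - 1 + m - 1 = c + m - 2 := by omega
          rw [he1] at h1
          have hsymm : (c + m - 2).choose (c - 1) = (c + m - 2).choose (m - 1) := by
            rw [show c - 1 = (c + m - 2) - (m - 1) by omega]
            exact Nat.choose_symm (by omega)
          have hp1 := Nat.choose_succ_succ' (c + m - 2) (m - 1)
          rw [show c + m - 2 + 1 = c + m - 1 by omega, show m - 1 + 1 = m by omega] at hp1
          have hp2 := Nat.choose_succ_succ' (c + m - 2) (c - 1)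
          rw [show c - 1 + 1 = c by omega] at hp2
          rw [show c + m - 2 + 1 = c + m - 1 by omega] at hp2
          omega
    -- sum both sides
    have hsum := Finset.sum_congr rfl hterm
    rw [Finset.sum_add_distrib] at hsum
    -- reindex the two choose sums
    have hre : ∀ d : ℕ, ∑ v ∈ Finset.Icc 1 B, (v + m - 1).choose d
        = ∑ i ∈ Finset.range B, (m + i).choose d := by
      intro d
      rw [← Finset.Ico_add_one_right_eq_Icc, Finset.sum_Ico_eq_sum_range]
      refine Finset.sum_congr (by norm_num) fun i _ => ?_
      congr 1
      omega
    rw [hre c, hre m] at hsum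
    have hsc := hs_choose m c B
    have hsm := hs_choose m m B
    have hz1 : m.choose (c + 1) = 0 := Nat.choose_eq_zero_of_lt (by omega)
    have hz2 : m.choose (m + 1) = 0 := Nat.choose_eq_zero_of_lt (by omega)
    rw [hz1] at hsc
    rw [hz2] at hsm
    rcases Nat.eq_zero_or_pos B with rfl | hB
    · have hz3 : (0 + (m + 1) - 1).choose (c + 1) = 0 := Nat.choose_eq_zero_of_lt (by omega)
      have hz4 : (0 + (m + 1) - 1).choose (m + 1) = 0 := Nat.choose_eq_zero_of_lt (by omega)
      rw [hz3, hz4]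
      simp [hcard]
    · have he2 : B + (m + 1) - 1 = B + m := by omega
      rw [he2, hcard]
      omega

lemma mem_DL : ∀ (m c B : ℕ) (l : List ℕ), B ≤ c →
    (l ∈ DL m B c ↔ l.length = m ∧ List.Pairwise (fun a b => b ≤ a) l ∧
      ∀ j (hj : j < l.length), 1 ≤ l.get ⟨j, hj⟩ ∧ l.get ⟨j, hj⟩ ≤ B ∧
        l.get ⟨j, hj⟩ + j ≤ c) := by
  intro m
  induction m with
  | zero =>
    intro c B l _
    simp only [DL, Finset.mem_singleton]
    constructor
    · rintro rfl; simp
    · rintro ⟨hl, -, -⟩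
      exact List.eq_nil_of_length_eq_zero hl
  | succ m ih =>
    intro c B l hBc
    simp only [DL, Finset.mem_biUnion, Finset.mem_image, Finset.mem_Icc]
    constructor
    · rintro ⟨v, ⟨hv1, hvB⟩, t, ht, rfl⟩
      have hmin : min v (c - 1) ≤ c - 1 := min_le_right _ _
      obtain ⟨htlen, htsort, htidx⟩ := (ih (c - 1) (min v (c - 1)) t hmin).mp ht
      have hc1 : 1 ≤ c := by omega
      refine ⟨by simp [htlen], ?_, ?_⟩
      · rw [List.pairwise_cons]
        refine ⟨fun b hb => ?_, htsort⟩
        obtain ⟨⟨j, hj⟩, rfl⟩ := List.mem_iff_get.mp hb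
        have := htidx j hj
        omega
      · intro j hj
        cases j with
        | zero =>
          simp only [List.get]
          exact ⟨hv1, hvB, by omega⟩
        | succ i =>
          simp only [List.length_cons, Nat.succ_lt_succ_iff] at hj
          have := htidx i hj
          simp only [List.get]
          refine ⟨this.1, by omega, by omega⟩
    · rintro ⟨hlen, hsort, hidx⟩
      cases l with
      | nil => simp at hlen
      | cons v t =>
        have hv := hidx 0 (by simp)
        simp only [List.get] at hv
        refine ⟨v, ⟨hv.1, hv.2.1⟩, t, ?_, rfl⟩
        rw [List.pairwise_cons] at hsort
        have hmin : min v (c - 1) ≤ c - 1 := min_le_right _ _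
        rw [ih (c - 1) (min v (c - 1)) t hmin]
        refine ⟨by simpa using hlen, hsort.2, ?_⟩
        intro j hj
        have hidx' := hidx (j + 1) (by simpa using Nat.succ_lt_succ hj)
        simp only [List.get] at hidx'
        have hmem : t.get ⟨j, hj⟩ ≤ v := hsort.1 _ (List.get_mem _ _)
        refine ⟨hidx'.1, by omega, by omega⟩

lemma sorted_ncard (k n : ℕ) (hn : 1 ≤ n) :
    {f : List ℕ | (f.length = n ∧ ∀ p ∈ f, 1 ≤ p ∧ p ≤ n) ∧ (naplesSpots k n ∅ f).isSome ∧
      List.Pairwise (fun a b => b ≤ a) f} = ↑(DL n n (n + k)) := by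
  ext f
  simp only [Set.mem_setOf_eq, Finset.coe_sort_coe, Finset.mem_coe]
  rw [mem_DL n (n + k) n f (by omega)]
  constructor
  · rintro ⟨⟨hlen, hmem⟩, hpark, hsort⟩
    refine ⟨hlen, hsort, fun j hj => ?_⟩
    have h1 := hmem (f.get ⟨j, hj⟩) (List.get_mem _ _)
    have h2 := bounds_of_parks hlen hmem hsort hpark j hj
    exact ⟨h1.1, h1.2, h2⟩
  · rintro ⟨hlen, hsort, hidx⟩
    have hmem : ∀ p ∈ f, 1 ≤ p ∧ p ≤ n := by
      intro p hp
      obtain ⟨⟨j, hj⟩, rfl⟩ := List.mem_iff_get.mp hp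
      exact ⟨(hidx j hj).1, (hidx j hj).2.1⟩
    refine ⟨⟨hlen, hmem⟩, ?_, hsort⟩
    apply parks_of_bounds f ∅
    · simp [hlen]
    · intro j hj
      have := hidx j hj
      simp only [Finset.card_empty]
      refine ⟨this.1, this.2.1, by omega⟩

end NaplesAux

/-- For all `k ≥ 0` and `n ≥ 1`, the total number of descending
`k`-Naples parking functions of length `n` equals
`binom(2n−1, n) − binom(2n−1, n+k+1)`. -/
theorem statement16 (k n : ℕ) (hn : 1 ≤ n) :
    Set.ncard {f : List ℕ | IsNaplesPF k n f ∧ List.Pairwise (fun a b => b ≤ a) f} =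
      (2 * n - 1).choose n - (2 * n - 1).choose (n + k + 1) := by
  have hset : {f : List ℕ | IsNaplesPF k n f ∧ List.Pairwise (fun a b => b ≤ a) f}
      = ↑(NaplesAux.DL n n (n + k)) := by
    rw [← NaplesAux.sorted_ncard k n hn]
    ext f
    simp only [Set.mem_setOf_eq, IsNaplesPF, IsParkingPref, ParksAllFrom]
    tauto
  rw [hset, Set.ncard_coe_finset]
  have hc := NaplesAux.card_DL n (n + k) n (by omega) (by omega)
  have h2 : 2 * n - 1 = n + n - 1 := by omega
  rw [h2]
  omega
end
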